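/- Let m ≥ 1, c ≥ 0, k ≥ 1 be integers and suppose m_1, ..., m_k are non-negative integers with Σ_{i=1}^k m_i ≤ km + c, and let C_k be a finite connected subgraph of Z^2 with exactly Σ_{i=1}^k m_i edges. If Σ_{i=1}^k m_i ≤ km − 2, then |∂C_k| ≤ 2km, i.e., if Breaker has claimed 2km distinct edges all lying in ∂C_k and has not yet claimed all of ∂C_k (so |∂C_k| ≥ 2km + 1), then Σ_{i=1}^k m_i ≥ km − 1. -/

import Mathlib

open SimpleGraph Finset

/-- The square lattice `ℤ²`. -/
def Grid : SimpleGraph (ℤ × ℤ) where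
  Adj u v := |u.1 - v.1| + |u.2 - v.2| = 1
  symm := by refine ⟨?_⟩; intro u v h; simpa [abs_sub_comm] using h
  loopless := by refine ⟨?_⟩; intro u h; simp at h

/-- The edge boundary of a subgraph `H` of `ℤ²`: edges of the lattice not in `H`
but incident to a vertex of `H`. -/
def edgeBoundary (H : Grid.Subgraph) : Set (Sym2 (ℤ × ℤ)) :=
  {e | e ∈ Grid.edgeSet ∧ e ∉ H.edgeSet ∧ ∃ v ∈ H.verts, v ∈ e}


lemma exists_adj_dist_lt {V : Type*} (G : SimpleGraph V) (hc : G.Connected)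
    (r v : V) (hv : v ≠ r) : ∃ u, G.Adj v u ∧ G.dist u r < G.dist v r := by
  obtain ⟨p, hp, hlen⟩ := hc.exists_path_of_dist v r
  cases p with
  | nil => exact absurd rfl hv
  | cons h q =>
    refine ⟨_, h, ?_⟩
    calc G.dist _ r ≤ q.length := SimpleGraph.dist_le q
    _ < q.length + 1 := Nat.lt_succ_self _
    _ = G.dist v r := by simpa using hlen

lemma card_le_edges {V : Type*} [Fintype V] (G : SimpleGraph V) [DecidableEq V]
    [DecidableRel G.Adj] (hc : G.Connected) :
    Fintype.card V ≤ #G.edgeFinset + 1 := by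
  classical
  obtain ⟨r⟩ := hc.nonempty
  have key : #(Finset.univ.erase r) ≤ #G.edgeFinset := by
    have hch : ∀ v ∈ Finset.univ.erase r, ∃ u, G.Adj v u ∧ G.dist u r < G.dist v r := by
      intro v hv
      exact exists_adj_dist_lt G hc r v (Finset.ne_of_mem_erase hv)
    choose f hf1 hf2 using hch
    apply Finset.card_le_card_of_injOn
      (fun v => if h : v ∈ Finset.univ.erase r then s(v, f v h) else s(v,v))
    · intro v hv
      simp only [dif_pos (show v ∈ Finset.univ.erase r from hv)]
      simpa [SimpleGraph.mem_edgeFinset] using (hf1 v hv)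
    · intro v hv w hw he
      have hv' : v ∈ Finset.univ.erase r := by simpa using hv
      have hw' : w ∈ Finset.univ.erase r := by simpa using hw
      simp only [dif_pos hv', dif_pos hw', Sym2.eq_iff] at he
      rcases he with ⟨h1, _⟩ | ⟨h1, h2⟩
      · exact h1
      · exfalso
        have a1 := hf2 v hv'
        have a2 := hf2 w hw'
        rw [h2] at a1; rw [← h1] at a2
        omega
  simpa [Finset.card_erase_of_mem] using key

def nbrs (v : ℤ × ℤ) : Finset (ℤ × ℤ) :=
  {(v.1+1, v.2), (v.1-1, v.2), (v.1, v.2+1), (v.1, v.2-1)}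

lemma grid_adj_iff {v w : ℤ × ℤ} : Grid.Adj v w ↔ w ∈ nbrs v := by
  change |v.1 - w.1| + |v.2 - w.2| = 1 ↔ _
  simp only [nbrs, Finset.mem_insert, Finset.mem_singleton, Prod.ext_iff]
  rcases abs_cases (v.1 - w.1) with ⟨h1, h2⟩ | ⟨h1, h2⟩ <;>
    rcases abs_cases (v.2 - w.2) with ⟨h3, h4⟩ | ⟨h3, h4⟩ <;> omega

lemma card_nbrs (v : ℤ × ℤ) : (nbrs v).card = 4 := by
  simp only [nbrs]
  rw [Finset.card_insert_of_notMem (by simp [Prod.ext_iff] <;> omega),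
    Finset.card_insert_of_notMem (by simp [Prod.ext_iff] <;> omega),
    Finset.card_insert_of_notMem (by simp [Prod.ext_iff] <;> omega),
    Finset.card_singleton]

lemma boundary_le (C : Grid.Subgraph) (hconn : C.Connected) (hfin : C.verts.Finite) :
    (edgeBoundary C).ncard ≤ 2 * C.edgeSet.ncard + 4 := by
  classical
  haveI : Fintype ↥C.verts := hfin.fintype
  set G := C.coe with hG
  have hGconn : G.Connected := hconn.coe
  -- edge count
  have hEcard : C.edgeSet.ncard = #G.edgeFinset := by
    rw [← Subgraph.image_coe_edgeSet_coe C,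
      Set.ncard_image_of_injective _ (Sym2.map.injective Subtype.val_injective),
      Set.ncard_eq_toFinset_card']
    congr 1
  set Vfin := hfin.toFinset with hVfin
  have hVcard : Vfin.card = Fintype.card ↥C.verts := by
    simp [hVfin, Set.Finite.card_toFinset, Set.toFinset_card]
  set d : (ℤ × ℤ) → ℕ := fun v => #((nbrs v).filter (fun w => s(v,w) ∈ C.edgeSet)) with hd
  -- handshake
  have hhs : ∑ v ∈ Vfin, d v = 2 * #G.edgeFinset := by
    rw [Finset.sum_subtype (p := fun v => v ∈ C.verts) Vfin (by simp [hVfin]) d,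
      ← G.sum_degrees_eq_twice_card_edges]
    apply Finset.sum_congr rfl
    intro a _
    rw [← SimpleGraph.card_neighborFinset_eq_degree]
    refine (Finset.card_bij (fun (w : ↥C.verts) (_ : w ∈ @SimpleGraph.neighborFinset _ G a (G.neighborSetFintype a)) => (↑w : ℤ × ℤ))
      ?_ ?_ ?_).symm
    · intro w hw
      rw [SimpleGraph.mem_neighborFinset] at hw
      have hadj : C.Adj ↑a ↑w := hw
      simp only [hd, Finset.mem_filter]
      exact ⟨grid_adj_iff.mp hadj.adj_sub, Subgraph.mem_edgeSet.mpr hadj⟩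
    · intro w _ w' _ h
      exact Subtype.ext h
    · intro w hw
      simp only [hd, Finset.mem_filter] at hw
      have hadj : C.Adj ↑a w := Subgraph.mem_edgeSet.mp hw.2
      refine ⟨⟨w, hadj.snd_mem⟩, ?_, rfl⟩
      rw [SimpleGraph.mem_neighborFinset]
      exact hadj
  -- boundary subset of biUnion
  set bnd : Finset (Sym2 (ℤ × ℤ)) :=
    Vfin.biUnion (fun v => ((nbrs v).filter (fun w => s(v,w) ∉ C.edgeSet)).image
      (fun w => s(v,w))) with hbnd
  have hsub : edgeBoundary C ⊆ ↑bnd := by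
    intro e he
    obtain ⟨hGe, hnotin, v, hv, hve⟩ := he
    induction e with
    | _ a b =>
      rw [SimpleGraph.mem_edgeSet] at hGe
      rw [Sym2.mem_iff] at hve
      rw [hbnd, Finset.coe_biUnion]
      rcases hve with rfl | rfl
      · refine Set.mem_biUnion (by simpa [hVfin] using hv) ?_
        simp only [Finset.coe_image, Set.mem_image, Finset.mem_coe, Finset.mem_filter]
        exact ⟨b, ⟨grid_adj_iff.mp hGe, hnotin⟩, rfl⟩
      · refine Set.mem_biUnion (by simpa [hVfin] using hv) ?_
        simp only [Finset.coe_image, Set.mem_image, Finset.mem_coe, Finset.mem_filter]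
        refine ⟨a, ⟨grid_adj_iff.mp hGe.symm, ?_⟩, Sym2.eq_swap⟩
        rwa [Sym2.eq_swap]
  have hcount : (edgeBoundary C).ncard + ∑ v ∈ Vfin, d v ≤ 4 * Vfin.card := by
    have h1 : (edgeBoundary C).ncard ≤ bnd.card := by
      rw [← Set.ncard_coe_finset]
      exact Set.ncard_le_ncard hsub (bnd.finite_toSet)
    have h2 : bnd.card ≤ ∑ v ∈ Vfin, #((nbrs v).filter (fun w => s(v,w) ∉ C.edgeSet)) := by
      refine (Finset.card_biUnion_le).trans ?_
      exact Finset.sum_le_sum fun v _ => Finset.card_image_le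
    have h3 : ∀ v, #((nbrs v).filter (fun w => s(v,w) ∉ C.edgeSet)) + d v = 4 := by
      intro v
      rw [hd]
      rw [add_comm, Finset.card_filter_add_card_filter_not, card_nbrs]
    calc (edgeBoundary C).ncard + ∑ v ∈ Vfin, d v
        ≤ ∑ v ∈ Vfin, #((nbrs v).filter (fun w => s(v,w) ∉ C.edgeSet)) + ∑ v ∈ Vfin, d v := by
          exact Nat.add_le_add_right (h1.trans h2) _
      _ = ∑ v ∈ Vfin, (#((nbrs v).filter (fun w => s(v,w) ∉ C.edgeSet)) + d v) := by
          rw [Finset.sum_add_distrib]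
      _ = ∑ v ∈ Vfin, 4 := by exact Finset.sum_congr rfl fun v _ => h3 v
      _ = 4 * Vfin.card := by rw [Finset.sum_const, smul_eq_mul, mul_comm]
  have htree : Fintype.card ↥C.verts ≤ #G.edgeFinset + 1 := card_le_edges G hGconn
  rw [hhs, hVcard] at hcount
  rw [hEcard]
  omega

/-- Lemma 4.10: for Maker's finite connected graph `C` with `∑ mᵢ ≤ km + c` edges,
if `∑ mᵢ ≤ km - 2` then `|∂C| ≤ 2km`; equivalently, if Breaker has claimed `2km`
boundary edges and not yet won (`|∂C| ≥ 2km + 1`), then `∑ mᵢ ≥ km - 1`. -/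
theorem maker_claims_lower_bound (m c k : ℕ) (hm : 1 ≤ m) (hk : 1 ≤ k)
    (mseq : ℕ → ℕ) (C : Grid.Subgraph) (hconn : C.Connected)
    (hfin : C.verts.Finite)
    (hE : C.edgeSet.ncard = ∑ i ∈ Finset.range k, mseq i)
    (hsum : ∑ i ∈ Finset.range k, mseq i ≤ k * m + c) :
    (((∑ i ∈ Finset.range k, mseq i : ℕ) : ℤ) ≤ (k : ℤ) * m - 2 →
        (edgeBoundary C).ncard ≤ 2 * k * m) ∧
    (2 * k * m + 1 ≤ (edgeBoundary C).ncard →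
        (k : ℤ) * m - 1 ≤ ((∑ i ∈ Finset.range k, mseq i : ℕ) : ℤ)) := by
  classical
  set S := ∑ i ∈ Finset.range k, mseq i with hS
  have main : (edgeBoundary C).ncard ≤ 2 * S + 4 := by
    rw [← hE]; exact boundary_le C hconn hfin
  set K := k * m with hKdef
  have hKi : ((K : ℕ) : ℤ) = (k : ℤ) * m := by rw [hKdef]; push_cast; ring
  have h2km : 2 * k * m = 2 * K := by rw [hKdef]; ring
  constructor
  · intro h
    have h2 : S + 2 ≤ K := by
      have : (S : ℤ) + 2 ≤ (K : ℤ) := by rw [hKi]; linarith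
      exact_mod_cast this
    rw [h2km]
    omega
  · intro h
    rw [h2km] at h
    by_contra hcon
    push_neg at hcon
    rw [← hKi] at hcon
    omega
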